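/- Let f : ℝⁿ → ℝⁿ and g : ℝⁿ → ℝ^{n×m} be continuously differentiable, and let (x*, u*) be a fixed point: f(x*) + g(x*)u* = 0. Let F ∈ ℝ^{n×n} be the Jacobian of x ↦ f(x) + g(x)u* at x* and G = g(x*). Suppose there exist K ∈ ℝ^{m×n} and symmetric positive definite matrices P, N ∈ ℝ^{n×n} with (F − GK)ᵀP + P(F − GK) = −N. Then there exists ε > 0 such that, setting b(x) = ε − (x − x*)ᵀP(x − x*) and ũ(x) = u* − K(x − x*), one has ∇b(x)ᵀ(f(x) + g(x)ũ(x)) > 0 for every x ≠ x* with b(x) ≥ 0; in particular ∇b(x) ≠ 0 whenever b(x) = 0, and for every x with b(x) ≥ 0 there exists u ∈ ℝᵐ with ∇b(x)ᵀ(f(x) + g(x)u) ≥ 0. -/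

import Mathlib

open Matrix

/-- The quadratic barrier candidate `b(x) = ε − (x − x*)ᵀ P (x − x*)`. -/
def quadB {n : ℕ} (P : Matrix (Fin n) (Fin n) ℝ) (xs : Fin n → ℝ) (ε : ℝ)
    (x : Fin n → ℝ) : ℝ :=
  ε - ∑ i, ∑ j, (x i - xs i) * P i j * (x j - xs j)

/-- The gradient `∇b(x) = −2P(x − x*)` of the quadratic barrier. -/
def quadGrad {n : ℕ} (P : Matrix (Fin n) (Fin n) ℝ) (xs : Fin n → ℝ)
    (x : Fin n → ℝ) : Fin n → ℝ :=
  fun i => -2 * ∑ j, P i j * (x j - xs j)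

lemma aux_dot_abs {k : ℕ} (u w : Fin k → ℝ) : |u ⬝ᵥ w| ≤ k * ‖u‖ * ‖w‖ := by
  calc |∑ i, u i * w i| ≤ ∑ i, |u i * w i| := Finset.abs_sum_le_sum_abs _ _
    _ ≤ ∑ _i : Fin k, ‖u‖ * ‖w‖ := by
        refine Finset.sum_le_sum fun i _ => ?_
        rw [abs_mul]
        have h1 : |u i| ≤ ‖u‖ := by simpa [Real.norm_eq_abs] using norm_le_pi_norm u i
        have h2 : |w i| ≤ ‖w‖ := by simpa [Real.norm_eq_abs] using norm_le_pi_norm w i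
        exact mul_le_mul h1 h2 (abs_nonneg _) (norm_nonneg _)
    _ = k * ‖u‖ * ‖w‖ := by simp [Finset.sum_const, Finset.card_univ]; ring

lemma aux_mulVec_bound {a b : ℕ} (M : Fin a → Fin b → ℝ) (w : Fin b → ℝ) :
    ‖(fun i => ∑ j, M i j * w j : Fin a → ℝ)‖ ≤ (∑ i, ∑ j, |M i j|) * ‖w‖ := by
  refine (pi_norm_le_iff_of_nonneg (by positivity)).2 fun i => ?_
  rw [Real.norm_eq_abs]
  calc |∑ j, M i j * w j| ≤ ∑ j, |M i j * w j| := Finset.abs_sum_le_sum_abs _ _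
    _ ≤ ∑ j, |M i j| * ‖w‖ := by
        refine Finset.sum_le_sum fun j _ => ?_
        rw [abs_mul]
        exact mul_le_mul_of_nonneg_left
          (by simpa [Real.norm_eq_abs] using norm_le_pi_norm w j) (abs_nonneg _)
    _ = (∑ j, |M i j|) * ‖w‖ := (Finset.sum_mul _ _ _).symm
    _ ≤ (∑ i, ∑ j, |M i j|) * ‖w‖ := by
        refine mul_le_mul_of_nonneg_right ?_ (norm_nonneg _)
        exact Finset.single_le_sum (f := fun i' => ∑ j, |M i' j|)
          (fun i' _ => by positivity) (Finset.mem_univ i)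

lemma aux_coercive {k : ℕ} (M : Matrix (Fin k) (Fin k) ℝ) (hM : M.PosDef) :
    ∃ c : ℝ, 0 < c ∧ ∀ v : Fin k → ℝ, c * ‖v‖ ^ 2 ≤ v ⬝ᵥ M *ᵥ v := by
  have hq : Continuous fun v : Fin k → ℝ => v ⬝ᵥ M *ᵥ v := by
    unfold dotProduct mulVec
    exact continuous_finset_sum _ fun i _ => (continuous_apply i).mul
      (continuous_finset_sum _ fun j _ => continuous_const.mul (continuous_apply j))
  have hpos : ∀ v : Fin k → ℝ, v ≠ 0 → 0 < v ⬝ᵥ M *ᵥ v := by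
    intro v hv
    simpa using hM.dotProduct_mulVec_pos hv
  have hscale : ∀ (a : ℝ) (v : Fin k → ℝ), (a • v) ⬝ᵥ M *ᵥ (a • v) = a ^ 2 * (v ⬝ᵥ M *ᵥ v) := by
    intro a v
    rw [Matrix.mulVec_smul, smul_dotProduct, dotProduct_smul]
    simp [smul_eq_mul]; ring
  rcases Nat.eq_zero_or_pos k with hk | hk
  · refine ⟨1, one_pos, fun v => ?_⟩
    subst hk
    have : v = 0 := Subsingleton.elim _ _
    rw [this, norm_zero]
    simp [dotProduct]
  · have hsne : (Metric.sphere (0 : Fin k → ℝ) 1).Nonempty := by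
      refine ⟨fun _ => 1, ?_⟩
      have : Nonempty (Fin k) := ⟨⟨0, hk⟩⟩
      simp [mem_sphere_iff_norm, Pi.norm_def]
      rw [Finset.sup_const Finset.univ_nonempty]
    obtain ⟨v0, hv0mem, hmin⟩ := (isCompact_sphere (0 : Fin k → ℝ) 1).exists_isMinOn hsne
      hq.continuousOn
    have hv0norm : ‖v0‖ = 1 := by simpa [mem_sphere_iff_norm] using hv0mem
    have hv0ne : v0 ≠ 0 := by intro h; rw [h] at hv0norm; simp at hv0norm
    refine ⟨v0 ⬝ᵥ M *ᵥ v0, hpos v0 hv0ne, fun v => ?_⟩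
    rcases eq_or_ne v 0 with rfl | hv
    · simp [dotProduct]
    · have hnv : 0 < ‖v‖ := norm_pos_iff.2 hv
      set u : Fin k → ℝ := ‖v‖⁻¹ • v with hu
      have hunorm : u ∈ Metric.sphere (0 : Fin k → ℝ) 1 := by
        simp [hu, mem_sphere_iff_norm, norm_smul, abs_of_pos (inv_pos.2 hnv),
          inv_mul_cancel₀ hnv.ne']
      have := hmin hunorm
      have hqu : u ⬝ᵥ M *ᵥ u = ‖v‖⁻¹ ^ 2 * (v ⬝ᵥ M *ᵥ v) := hscale _ _
      have h2 : v0 ⬝ᵥ M *ᵥ v0 ≤ ‖v‖⁻¹ ^ 2 * (v ⬝ᵥ M *ᵥ v) := by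
        simpa [hqu] using this
      have h3 : ‖v‖ ^ 2 * (v0 ⬝ᵥ M *ᵥ v0) ≤ ‖v‖ ^ 2 * (‖v‖⁻¹ ^ 2 * (v ⬝ᵥ M *ᵥ v)) :=
        mul_le_mul_of_nonneg_left h2 (by positivity)
      have h4 : ‖v‖ ^ 2 * (‖v‖⁻¹ ^ 2 * (v ⬝ᵥ M *ᵥ v)) = v ⬝ᵥ M *ᵥ v := by
        field_simp
      rw [mul_comm]
      rw [h4] at h3
      exact h3

lemma aux_lyap_dot {k : ℕ} (P N A : Matrix (Fin k) (Fin k) ℝ) (hPsym : Pᵀ = P)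
    (hl : Aᵀ * P + P * A = -N) (v : Fin k → ℝ) :
    -2 * ((P *ᵥ v) ⬝ᵥ (A *ᵥ v)) = v ⬝ᵥ N *ᵥ v := by
  have h1 : v ⬝ᵥ ((Aᵀ * P + P * A) *ᵥ v) = -(v ⬝ᵥ N *ᵥ v) := by
    rw [hl, Matrix.neg_mulVec, dotProduct_neg]
  have hvP : v ᵥ* P = P *ᵥ v := by
    conv_lhs => rw [← hPsym]
    rw [Matrix.vecMul_transpose]
  have h2 : v ⬝ᵥ ((Aᵀ * P + P * A) *ᵥ v) = 2 * ((P *ᵥ v) ⬝ᵥ (A *ᵥ v)) := by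
    rw [Matrix.add_mulVec, dotProduct_add, ← Matrix.mulVec_mulVec, ← Matrix.mulVec_mulVec,
      dotProduct_mulVec v Aᵀ (P *ᵥ v), Matrix.vecMul_transpose,
      dotProduct_mulVec v P (A *ᵥ v), hvP, dotProduct_comm (A *ᵥ v) (P *ᵥ v)]
    ring
  linarith

/-- near a stabilizable fixed point `(x*, u*)`, the quadratic function
`b(x) = ε − (x−x*)ᵀP(x−x*)` obtained from the Lyapunov equation is a local CBF. -/
theorem local_cbf_at_equilibrium {n m : ℕ}
    (f : (Fin n → ℝ) → (Fin n → ℝ))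
    (g : (Fin n → ℝ) → Fin n → Fin m → ℝ)
    (hf : ContDiff ℝ 1 f) (hg : ContDiff ℝ 1 g)
    (xs : Fin n → ℝ) (us : Fin m → ℝ)
    (hfix : (fun i => f xs i + ∑ j, g xs i j * us j) = 0)
    (F : Matrix (Fin n) (Fin n) ℝ)
    (hF : HasFDerivAt (fun x : Fin n → ℝ => (fun i => f x i + ∑ j, g x i j * us j))
      (LinearMap.toContinuousLinearMap (Matrix.mulVecLin F)) xs)
    (K : Matrix (Fin m) (Fin n) ℝ) (P N : Matrix (Fin n) (Fin n) ℝ)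
    (hP : P.PosDef) (hN : N.PosDef)
    (hlyap : (F - Matrix.of (g xs) * K)ᵀ * P + P * (F - Matrix.of (g xs) * K) = -N) :
    ∃ ε : ℝ, 0 < ε ∧
      (∀ x : Fin n → ℝ, x ≠ xs → 0 ≤ quadB P xs ε x →
        0 < ∑ i, quadGrad P xs x i *
          (f x i + ∑ j, g x i j * (us j - ∑ k, K j k * (x k - xs k)))) ∧
      (∀ x : Fin n → ℝ, quadB P xs ε x = 0 → quadGrad P xs x ≠ 0) ∧
      (∀ x : Fin n → ℝ, 0 ≤ quadB P xs ε x → ∃ u : Fin m → ℝ,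
        0 ≤ ∑ i, quadGrad P xs x i * (f x i + ∑ j, g x i j * u j)) := by
  classical
  have hPsym : Pᵀ = P := by
    ext i j
    have h := congrFun (congrFun hP.1 i) j
    simpa using h
  obtain ⟨cP, hcP, hPc⟩ := aux_coercive P hP
  obtain ⟨cN, hcN, hNc⟩ := aux_coercive N hN
  -- little-o, part 1
  have h1 : (fun x => (f x + Matrix.of (g x) *ᵥ us) - F *ᵥ (x - xs))
      =o[nhds xs] fun x => x - xs := by
    have h := hF.isLittleO
    simp only [Matrix.mulVecLin_apply, LinearMap.coe_toContinuousLinearMap'] at h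
    rw [hfix] at h
    simp only [sub_zero] at h
    exact h
  -- little-o, part 2
  have h2 : (fun x => (Matrix.of (g x) - Matrix.of (g xs)) *ᵥ (K *ᵥ (x - xs)))
      =o[nhds xs] fun x => x - xs := by
    rw [Asymptotics.isLittleO_iff]
    intro c hc
    set CK : ℝ := ∑ j, ∑ k, |K j k| with hCK
    have hρcont : Continuous fun x : Fin n → ℝ =>
        (∑ i, ∑ j, |g x i j - g xs i j|) * CK := by
      refine Continuous.mul ?_ continuous_const
      refine continuous_finset_sum _ fun i _ => continuous_finset_sum _ fun j _ => ?_
      have hcg : Continuous fun x : Fin n → ℝ => g x i j :=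
        (continuous_apply j).comp ((continuous_apply i).comp hg.continuous)
      exact (hcg.sub continuous_const).abs
    have hev : ∀ᶠ x in nhds xs, (∑ i, ∑ j, |g x i j - g xs i j|) * CK < c := by
      have ht := hρcont.tendsto xs
      have h0 : (∑ i, ∑ j, |g xs i j - g xs i j|) * CK = 0 := by simp
      rw [h0] at ht
      exact ht.eventually_lt_const hc
    filter_upwards [hev] with x hx
    have hb1 : ‖(Matrix.of (g x) - Matrix.of (g xs)) *ᵥ (K *ᵥ (x - xs))‖
        ≤ (∑ i, ∑ j, |g x i j - g xs i j|) * ‖K *ᵥ (x - xs)‖ :=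
      aux_mulVec_bound (fun i j => g x i j - g xs i j) (K *ᵥ (x - xs))
    have hb2 : ‖K *ᵥ (x - xs)‖ ≤ CK * ‖x - xs‖ :=
      aux_mulVec_bound (fun j k => K j k) (x - xs)
    have hS0 : (0:ℝ) ≤ ∑ i, ∑ j, |g x i j - g xs i j| := by positivity
    calc ‖(Matrix.of (g x) - Matrix.of (g xs)) *ᵥ (K *ᵥ (x - xs))‖
        ≤ (∑ i, ∑ j, |g x i j - g xs i j|) * ‖K *ᵥ (x - xs)‖ := hb1
      _ ≤ (∑ i, ∑ j, |g x i j - g xs i j|) * (CK * ‖x - xs‖) :=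
          mul_le_mul_of_nonneg_left hb2 hS0
      _ = ((∑ i, ∑ j, |g x i j - g xs i j|) * CK) * ‖x - xs‖ := by ring
      _ ≤ c * ‖x - xs‖ := mul_le_mul_of_nonneg_right hx.le (norm_nonneg _)
  -- residual little-o
  have hrlo : (fun x => (f x + Matrix.of (g x) *ᵥ (us - K *ᵥ (x - xs)))
        - (F - Matrix.of (g xs) * K) *ᵥ (x - xs)) =o[nhds xs] fun x => x - xs := by
    have h12 := h1.sub h2
    refine h12.congr' (Filter.Eventually.of_forall fun x => ?_) Filter.EventuallyEq.rfl
    simp only [Matrix.mulVec_sub, Matrix.sub_mulVec, ← Matrix.mulVec_mulVec]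
    abel
  -- constants
  set Dc : ℝ := (n : ℝ) * (∑ i, ∑ j, |P i j|) with hDc
  have hDc0 : (0:ℝ) ≤ Dc := by positivity
  set c : ℝ := cN / (4 * Dc + 2) with hc
  have hc0 : 0 < c := div_pos hcN (by linarith)
  have hcc : c * (4 * Dc + 2) = cN := by
    rw [hc]; field_simp
  obtain ⟨δ, hδ0, hδ⟩ := Metric.eventually_nhds_iff.1 (hrlo.def hc0)
  set ε : ℝ := cP * (δ / 2) ^ 2 with hε
  have hε0 : 0 < ε := by positivity
  -- quadB as a dot product
  have hquad : ∀ x : Fin n → ℝ,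
      (∑ i, ∑ j, (x i - xs i) * P i j * (x j - xs j))
        = (x - xs) ⬝ᵥ P *ᵥ (x - xs) := by
    intro x
    simp only [dotProduct, mulVec, Pi.sub_apply, Finset.mul_sum]
    exact Finset.sum_congr rfl fun i _ => Finset.sum_congr rfl fun j _ => by ring
  -- main strict inequality
  have main : ∀ x : Fin n → ℝ, x ≠ xs → 0 ≤ quadB P xs ε x →
      0 < ∑ i, quadGrad P xs x i *
        (f x i + ∑ j, g x i j * (us j - ∑ k, K j k * (x k - xs k))) := by
    intro x hx hb
    have hv : x - xs ≠ 0 := sub_ne_zero.2 hx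
    have hB : 0 < ‖x - xs‖ := norm_pos_iff.2 hv
    -- smallness of v
    have hbq : (x - xs) ⬝ᵥ P *ᵥ (x - xs) ≤ ε := by
      have := hb
      rw [quadB] at this
      rw [← hquad x]
      linarith
    have hsmall : ‖x - xs‖ ≤ δ / 2 := by
      by_contra hcon
      push_neg at hcon
      have h6 : (δ / 2) ^ 2 < ‖x - xs‖ ^ 2 := by nlinarith [hδ0]
      have h7 : ε < cP * ‖x - xs‖ ^ 2 := by
        rw [hε]; nlinarith [hcP]
      linarith [hPc (x - xs), hbq]
    have hdist : dist x xs < δ := by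
      rw [dist_eq_norm]
      linarith
    have hrb : ‖(f x + Matrix.of (g x) *ᵥ (us - K *ᵥ (x - xs)))
        - (F - Matrix.of (g xs) * K) *ᵥ (x - xs)‖ ≤ c * ‖x - xs‖ := hδ hdist
    -- rewrite sum as dot product
    have hsum : (∑ i, quadGrad P xs x i *
          (f x i + ∑ j, g x i j * (us j - ∑ k, K j k * (x k - xs k))))
        = -2 * ((P *ᵥ (x - xs)) ⬝ᵥ (f x + Matrix.of (g x) *ᵥ (us - K *ᵥ (x - xs)))) := by
      have e1 : (P *ᵥ (x - xs)) ⬝ᵥ (f x + Matrix.of (g x) *ᵥ (us - K *ᵥ (x - xs)))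
          = ∑ i, (P *ᵥ (x - xs)) i * (f x + Matrix.of (g x) *ᵥ (us - K *ᵥ (x - xs))) i := rfl
      rw [e1, Finset.mul_sum]
      refine Finset.sum_congr rfl fun i _ => ?_
      rw [show (P *ᵥ (x - xs)) i = ∑ j, P i j * (x j - xs j) from rfl,
        show (f x + Matrix.of (g x) *ᵥ (us - K *ᵥ (x - xs))) i
          = f x i + ∑ j, g x i j * (us j - ∑ k, K j k * (x k - xs k)) from rfl]
      simp only [quadGrad]
      ring
    rw [hsum]
    -- decompose hcl = A v + r
    set v : Fin n → ℝ := x - xs with hvv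
    set rr : Fin n → ℝ := (f x + Matrix.of (g x) *ᵥ (us - K *ᵥ v))
        - (F - Matrix.of (g xs) * K) *ᵥ v with hrr
    have hdecomp : (f x + Matrix.of (g x) *ᵥ (us - K *ᵥ v))
        = (F - Matrix.of (g xs) * K) *ᵥ v + rr := by rw [hrr]; abel
    rw [hdecomp, dotProduct_add, mul_add,
      aux_lyap_dot P N (F - Matrix.of (g xs) * K) hPsym hlyap v]
    -- bounds
    have hNb := hNc v
    have hPvb : ‖P *ᵥ v‖ ≤ (∑ i, ∑ j, |P i j|) * ‖v‖ :=
      aux_mulVec_bound (fun i j => P i j) v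
    have habs : |(P *ᵥ v) ⬝ᵥ rr| ≤ (n : ℝ) * ‖P *ᵥ v‖ * ‖rr‖ := aux_dot_abs _ _
    have hd : |(P *ᵥ v) ⬝ᵥ rr| ≤ Dc * ‖v‖ * (c * ‖v‖) := by
      calc |(P *ᵥ v) ⬝ᵥ rr| ≤ (n : ℝ) * ‖P *ᵥ v‖ * ‖rr‖ := habs
        _ ≤ (n : ℝ) * ((∑ i, ∑ j, |P i j|) * ‖v‖) * (c * ‖v‖) := by
            have hn0 : (0:ℝ) ≤ (n : ℝ) := Nat.cast_nonneg n
            have hx1 : (n : ℝ) * ‖P *ᵥ v‖ ≤ (n : ℝ) * ((∑ i, ∑ j, |P i j|) * ‖v‖) :=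
              mul_le_mul_of_nonneg_left hPvb hn0
            exact mul_le_mul hx1 hrb (norm_nonneg _) (by positivity)
        _ = Dc * ‖v‖ * (c * ‖v‖) := by rw [hDc]; ring
    have h7 : -(2 * (Dc * ‖v‖ * (c * ‖v‖))) ≤ -2 * ((P *ᵥ v) ⬝ᵥ rr) := by
      have := le_abs_self ((P *ᵥ v) ⬝ᵥ rr)
      linarith
    have h8 : c * (4 * Dc + 2) * ‖v‖ ^ 2 = cN * ‖v‖ ^ 2 := by rw [hcc]
    nlinarith [hNb, h7, h8, mul_pos hc0 (mul_pos hB hB),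
      mul_nonneg (mul_nonneg hDc0 hc0.le) (mul_pos hB hB).le]
  refine ⟨ε, hε0, main, ?_, ?_⟩
  · -- gradient nonzero on the boundary
    intro x hb hgrad
    have hPv : P *ᵥ (x - xs) = 0 := by
      funext i
      have h := congrFun hgrad i
      simp only [quadGrad, Pi.zero_apply, neg_mul, neg_eq_zero, mul_eq_zero] at h
      have h' : ∑ j, P i j * (x j - xs j) = 0 := by
        rcases h with h | h
        · norm_num at h
        · exact h
      show (fun j => P i j) ⬝ᵥ (x - xs) = 0
      simpa [dotProduct] using h'
    have h0 : (x - xs) ⬝ᵥ P *ᵥ (x - xs) = 0 := by rw [hPv]; simp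
    rw [quadB, sub_eq_zero] at hb
    rw [hquad x] at hb
    rw [h0] at hb
    exact absurd hb (ne_of_gt hε0)
  · -- existence of admissible control
    intro x hb
    by_cases hx : x = xs
    · refine ⟨us, ?_⟩
      subst hx
      simp [quadGrad]
    · exact ⟨fun j => us j - ∑ k, K j k * (x k - xs k), (main x hx hb).le⟩
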